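/- Let d, q ≥ 1. If every continuous map f : Δ_{d-1}^{(d+1)(q-1)} → ℝ^d admits a winding partition, then every continuous map g : Δ_d^{(d+1)(q-1)} → ℝ^d admits a Tverberg partition {S_1, …, S_q} with |S_i| ≤ d+1 for all i. -/

import Mathlib

open scoped BigOperators

noncomputable section

/-- Euclidean space `ℝ^d`. -/
abbrev Euc (d : ℕ) : Type := EuclideanSpace ℝ (Fin d)

/-- The standard `N`-simplex `Δ^N ⊆ ℝ^{N+1}`. -/
def stdSimp (N : ℕ) : Set (Fin (N+1) → ℝ) :=
  {x | (∀ i, 0 ≤ x i) ∧ ∑ i, x i = 1}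

/-- The face `σ_S` of `Δ^N` spanned by the vertices in `S`. -/
def simpFace {N : ℕ} (S : Finset (Fin (N+1))) : Set (Fin (N+1) → ℝ) :=
  {x ∈ stdSimp N | ∀ i ∉ S, x i = 0}

/-- The `k`-skeleton `Δ_k^N` of the standard `N`-simplex. -/
def skel (N k : ℕ) : Set (Fin (N+1) → ℝ) :=
  {x ∈ stdSimp N | {i | x i ≠ 0}.ncard ≤ k + 1}

/-- A Tverberg partition for (the relevant restriction of) `f`: a set of `q`
pairwise disjoint nonempty vertex subsets whose faces have images with a common point. -/
def IsTverbergPartition (q : ℕ) {N d : ℕ}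
    (f : (Fin (N+1) → ℝ) → Euc d) (P : Finset (Finset (Fin (N+1)))) : Prop :=
  P.card = q ∧ (∀ S ∈ P, S.Nonempty) ∧
  (∀ S ∈ P, ∀ T ∈ P, S ≠ T → Disjoint S T) ∧
  (⋂ S ∈ P, f '' simpFace S).Nonempty

/-- The boundary `∂σ_S` of the face `σ_S`. -/
def simpFaceBoundary {N : ℕ} (S : Finset (Fin (N+1))) : Set (Fin (N+1) → ℝ) :=
  {x ∈ simpFace S | ∃ i ∈ S, x i = 0}

/-- `p ∈ W_{≠0}(f|_{∂σ_S})`: either `p` is in the image of the boundary, or the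
corestriction of `f|_{∂σ_S}` to `ℝ^d \ {p}` is not nullhomotopic (there is no
continuous map agreeing with `f` on `∂σ_S` that is homotopic to a constant). -/
def InWne (d : ℕ) {N : ℕ} (f : (Fin (N+1) → ℝ) → Euc d)
    (S : Finset (Fin (N+1))) (p : Euc d) : Prop :=
  p ∈ f '' simpFaceBoundary S ∨
  ¬ ∃ (g : C(↥(simpFaceBoundary S), ↥({p}ᶜ : Set (Euc d))))
      (y : ↥({p}ᶜ : Set (Euc d))),
      (∀ x : ↥(simpFaceBoundary S), (g x : Euc d) = f ↑x) ∧
      g.Homotopic (ContinuousMap.const _ y)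

/-- A winding partition (in dimension `d`) for `f` defined on the `(d-1)`-skeleton:
`q` pairwise disjoint nonempty vertex subsets, each of size at most `d+1`, together
with a winding point `p`. -/
def IsWindingPartition (d q : ℕ) {N : ℕ}
    (f : (Fin (N+1) → ℝ) → Euc d) (P : Finset (Finset (Fin (N+1)))) : Prop :=
  P.card = q ∧ (∀ S ∈ P, S.Nonempty) ∧ (∀ S ∈ P, S.card ≤ d + 1) ∧
  (∀ S ∈ P, ∀ T ∈ P, S ≠ T → Disjoint S T) ∧
  ∃ p : Euc d, ∀ S ∈ P,
    (S.card ≤ d → p ∈ f '' simpFace S) ∧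
    (S.card = d + 1 → InWne d f S p)


lemma convex_simpFace {N : ℕ} (S : Finset (Fin (N+1))) : Convex ℝ (simpFace S) := by
  intro x hx y hy a b ha hb hab
  refine ⟨⟨fun i => add_nonneg (mul_nonneg ha (hx.1.1 i)) (mul_nonneg hb (hy.1.1 i)), ?_⟩,
    fun i hi => ?_⟩
  · simp only [Pi.add_apply, Pi.smul_apply, smul_eq_mul]
    rw [Finset.sum_add_distrib, ← Finset.mul_sum, ← Finset.mul_sum, hx.1.2, hy.1.2]
    ring_nf; linarith
  · simp [hx.2 i hi, hy.2 i hi]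

lemma simpFace_nonempty {N : ℕ} {S : Finset (Fin (N+1))} (hS : S.Nonempty) :
    (simpFace S).Nonempty := by
  obtain ⟨i₀, hi₀⟩ := hS
  refine ⟨fun j => if j = i₀ then 1 else 0, ⟨fun i => by positivity, by simp⟩, fun i hi => ?_⟩
  simp only [ite_eq_right_iff, one_ne_zero]
  rintro rfl; exact absurd hi₀ hi

lemma simpFace_subset_skel {N k : ℕ} {S : Finset (Fin (N+1))} (h : S.card ≤ k + 1) :
    simpFace S ⊆ skel N k := by
  intro x hx
  refine ⟨hx.1, le_trans ?_ ((Set.ncard_coe_finset S) ▸ h)⟩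
  refine Set.ncard_le_ncard (fun i hi => ?_) S.finite_toSet
  by_contra hiS
  exact hi (hx.2 i hiS)

lemma simpFaceBoundary_subset {N : ℕ} (S : Finset (Fin (N+1))) :
    simpFaceBoundary S ⊆ simpFace S := fun _ hx => hx.1

/-- The Winding Number Conjecture implies the `d`-Skeleton Conjecture. -/
theorem winding_implies_dSkeleton (d q : ℕ) (hd : 1 ≤ d) (hq : 1 ≤ q)
    (H : ∀ f : (Fin ((d+1)*(q-1)+1) → ℝ) → Euc d,
      ContinuousOn f (skel ((d+1)*(q-1)) (d-1)) →
      ∃ P : Finset (Finset (Fin ((d+1)*(q-1)+1))), IsWindingPartition d q f P) :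
    ∀ g : (Fin ((d+1)*(q-1)+1) → ℝ) → Euc d,
      ContinuousOn g (skel ((d+1)*(q-1)) d) →
      ∃ P : Finset (Finset (Fin ((d+1)*(q-1)+1))),
        IsTverbergPartition q g P ∧ ∀ S ∈ P, S.card ≤ d + 1 := by
  intro g hg
  have hsub : skel ((d+1)*(q-1)) (d-1) ⊆ skel ((d+1)*(q-1)) d := fun x hx => ⟨hx.1, hx.2.trans (by omega)⟩
  obtain ⟨P, hcard, hne, hsize, hdisj, p, hp⟩ := H g (hg.mono hsub)
  refine ⟨P, ⟨hcard, hne, hdisj, ⟨p, Set.mem_iInter₂.mpr fun S hS => ?_⟩⟩, hsize⟩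
  rcases Nat.lt_or_ge S.card (d+1) with hc | hc
  · exact (hp S hS).1 (by omega)
  · have hc' : S.card = d + 1 := le_antisymm (hsize S hS) hc
    have hW : InWne d g S p := (hp S hS).2 hc'
    rcases hW with him | hnot
    · exact Set.image_mono (f := g) (simpFaceBoundary_subset S) him
    · by_contra hpn
      apply hnot
      have hfskel : simpFace S ⊆ skel ((d+1)*(q-1)) d := simpFace_subset_skel (by omega)
      have hgS : ContinuousOn g (simpFace S) := hg.mono hfskel
      obtain ⟨c, hc0⟩ := simpFace_nonempty (hne S hS)
      have hnep : ∀ x ∈ simpFace S, g x ∈ ({p}ᶜ : Set (Euc d)) := by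
        intro x hx
        simp only [Set.mem_compl_iff, Set.mem_singleton_iff]
        intro h; exact hpn ⟨x, hx, h⟩
      refine ⟨⟨fun x => ⟨g x, hnep x (simpFaceBoundary_subset S x.2)⟩, ?_⟩,
        ⟨g c, hnep c hc0⟩, fun x => rfl, ?_⟩
      · exact Continuous.subtype_mk
          ((hgS.mono (simpFaceBoundary_subset S)).restrict) _
      · have hmem : ∀ z : (unitInterval × ↥(simpFaceBoundary S)),
            ((1 : ℝ) - (z.1 : ℝ)) • (z.2 : Fin ((d+1)*(q-1)+1) → ℝ) + (z.1 : ℝ) • c ∈ simpFace S := by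
          intro z
          exact convex_simpFace S (simpFaceBoundary_subset S z.2.2) hc0
            (by linarith [z.1.2.2]) z.1.2.1 (by ring)
        have hcont : Continuous (fun z : (unitInterval × ↥(simpFaceBoundary S)) =>
            g (((1 : ℝ) - (z.1 : ℝ)) • (z.2 : Fin ((d+1)*(q-1)+1) → ℝ) + (z.1 : ℝ) • c)) := by
          apply hgS.comp_continuous _ hmem
          fun_prop
        refine ⟨⟨⟨fun z => ⟨g (((1 : ℝ) - (z.1 : ℝ)) • (z.2 : Fin ((d+1)*(q-1)+1) → ℝ) + (z.1 : ℝ) • c),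
            hnep _ (hmem z)⟩, hcont.subtype_mk _⟩, ?_, ?_⟩⟩
        · intro x; ext; simp; rfl
        · intro x; ext; simp
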